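/- arXiv:1605.01968 — 2 statements merged into one kernel-verified Lean document; each statement's English description precedes it below -/
import Mathlib

section
/- In the monoid M of the previous context (classes of projections over C(ℙ¹(𝒯))), the cancellation law x + z = y + z ⟹ x = y holds whenever x and y are of type II or type III (rank ≥ 1), but fails for type I: there exist distinct type-I elements (m,l) ≠ (m',l') with m + l = m' + l' that become equal after adding any type-II element. -/
/-- Representatives of unitary equivalence classes of projections over `C(ℙ¹(𝒯))`:
type I is `P_m ⊕ P_l`, type II is `Ĩₙ ⊞ (P_j ⊕ 0)` (rank `n > 0`), type III is
`Ĩ_{n-1} ⊞ (Ĩ - (P_k ⊕ 0))` (rank `n > 0`, `k > 0`). -/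
inductive Cls : Type
  | I : ℕ → ℕ → Cls
  | II : ℕ+ → ℕ → Cls
  | III : ℕ+ → ℕ+ → Cls
  deriving DecidableEq

namespace Cls

/-- The addition of classes of projections (diagonal direct sum of projections). -/
def add : Cls → Cls → Cls
  | I m l, I m' l' => I (m + m') (l + l')
  | I m l, II n j => II n (m + l + j)
  | II n j, I m l => II n (m + l + j)
  | I m l, III n k =>
      if h : (k : ℕ) ≤ m + l then II n (m + l - k)
      else III n ⟨(k : ℕ) - (m + l), by omega⟩
  | III n k, I m l =>
      if h : (k : ℕ) ≤ m + l then II n (m + l - k)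
      else III n ⟨(k : ℕ) - (m + l), by omega⟩
  | II n j, II n' j' => II (n + n') (j + j')
  | II n j, III n' k =>
      if h : (k : ℕ) ≤ j then II (n + n') (j - k)
      else III (n + n') ⟨(k : ℕ) - j, by omega⟩
  | III n' k, II n j =>
      if h : (k : ℕ) ≤ j then II (n + n') (j - k)
      else III (n + n') ⟨(k : ℕ) - j, by omega⟩
  | III n k, III n' k' => III (n + n') (k + k')

/-- The map to `K₀(C(ℙ¹(𝒯))) ≅ ℤ × ℤ`. -/
def phi : Cls → ℤ × ℤ
  | I m l => ((m : ℤ) + l, 0)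
  | II n j => ((j : ℤ), (n : ℕ))
  | III n k => (-((k : ℕ) : ℤ), (n : ℕ))

/-- classes of rank at least one, i.e. of type II or type III -/
def rankPos : Cls → Prop
  | I _ _ => False
  | II _ _ => True
  | III _ _ => True

lemma phi_add (a b : Cls) : phi (add a b) = phi a + phi b := by
  cases a <;> cases b <;> simp only [add] <;>
    first
    | (split <;> simp [phi, Prod.ext_iff, PNat.add_coe] <;> omega)
    | (simp [phi, Prod.ext_iff, PNat.add_coe]; try omega)

lemma phi_inj {x y : Cls} (hx : rankPos x) (hy : rankPos y)
    (h : phi x = phi y) : x = y := by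
  cases x <;> cases y <;> simp only [rankPos] at hx hy <;>
    simp only [phi, Prod.ext_iff] at h
  case II.II n j n' j' =>
    have h1 : j = j' := by exact_mod_cast h.1
    have h2 : (n : ℕ) = n' := by exact_mod_cast h.2
    exact by rw [h1, PNat.coe_injective h2]
  case II.III n j n' k =>
    exact absurd h.1 (by have := k.pos; omega)
  case III.II n k n' j =>
    exact absurd h.1 (by have := k.pos; omega)
  case III.III n k n' k' =>
    have h1 : (k : ℕ) = k' := by omega
    have h2 : (n : ℕ) = n' := by exact_mod_cast h.2
    rw [PNat.coe_injective h1, PNat.coe_injective h2]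

/-- cancellation `x + z = y + z → x = y` holds whenever `x, y` have rank ≥ 1
(type II or III), but fails for type I: there are distinct type-I elements `(m,l) ≠ (m',l')`
with `m + l = m' + l'` which become equal after adding any type-II element. -/
theorem stmt_8 :
    (∀ x y z : Cls, rankPos x → rankPos y → add x z = add y z → x = y) ∧
    (∃ m l m' l' : ℕ, (m, l) ≠ (m', l') ∧ m + l = m' + l' ∧
      ∀ (n : ℕ+) (j : ℕ), add (I m l) (II n j) = add (I m' l') (II n j)) := by
  constructor
  · intro x y z hx hy h
    apply phi_inj hx hy
    have := congrArg phi h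
    rw [phi_add, phi_add] at this
    exact add_right_cancel this
  · exact ⟨0, 1, 1, 0, by simp, by simp, fun n j => by simp [add]⟩


end Cls
end

section
/- The image of the monoid homomorphism φ: M → ℤ × ℤ (with φ((m,l)_I) = (m+l,0), φ((n,j)_II) = (j,n), φ((n,k)_III) = (−k,n)) equals the set (ℤ≥0 × {0}) ∪ (ℤ × ℤ>0), i.e., the positive cone of K₀(C(ℙ¹(𝒯))) is {(a,b) ∈ ℤ² : b > 0, or (b = 0 and a ≥ 0)}. -/
namespace Cls

/-- the image of the monoid homomorphism `φ : M → ℤ × ℤ` equals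
`(ℤ≥0 × {0}) ∪ (ℤ × ℤ>0)`, the positive cone of `K₀(C(ℙ¹(𝒯)))`. -/
theorem stmt_9 :
    Set.range phi = {p : ℤ × ℤ | (0 ≤ p.1 ∧ p.2 = 0) ∨ 0 < p.2} := by
  ext ⟨a, b⟩
  simp only [Set.mem_range, Set.mem_setOf_eq]
  constructor
  · rintro ⟨c, hc⟩
    cases c with
    | I m l => simp [phi] at hc; exact hc.2 ▸ Or.inl ⟨by omega, rfl⟩
    | II n j => simp [phi] at hc; exact Or.inr (hc.2 ▸ by exact_mod_cast n.pos)
    | III n k => simp [phi] at hc; exact Or.inr (hc.2 ▸ by exact_mod_cast n.pos)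
  · rintro (⟨ha, hb⟩ | hb)
    · exact ⟨I a.toNat 0, by simp [phi]; omega⟩
    · rcases le_or_gt 0 a with ha | ha
      · exact ⟨II ⟨b.toNat, by omega⟩ a.toNat, by simp [phi]; omega⟩
      · exact ⟨III ⟨b.toNat, by omega⟩ ⟨(-a).toNat, by omega⟩, by simp [phi]; omega⟩

end Cls
end
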